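/- Let n ≥ 1, U = {1,…,n}, let S = (S_1,…,S_m) be a family of nonempty subsets of U, and let k ≤ m. Define trees P and T as follows. P has a center vertex p with 3n⁴ pendant leaves; additionally p is adjacent to the centers of stars R_1,…,R_n (where R_i has exactly i leaves), X_1,…,X_{m−k} (each with n³ leaves), and Y_1,…,Y_k (each with n² leaves). T has a center vertex t with 3n⁴ pendant leaves; additionally t is adjacent to vertices t_1,…,t_m, where each t_i has n³ pendant leaves, one neighbour for each s ∈ S_i that is the center of a star with s leaves, and one further neighbour that is the center of a star with n² leaves. If the Inclusive Set Cover instance ⟨U, S, k⟩ is a yes-instance, then P is a minor of T. -/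

import Mathlib

/-- Inclusive Set Cover: ground set `{1,…,n}`, family `S` indexed by `ι`, budget `k`.
The instance is a yes-instance if some subfamily `R` with `|R| ≤ k` admits a surjection `f`
from the disjoint union `⊔_{i∈R} S_i` onto `{1,…,n}` with `f (v,i) ≤ v` everywhere. -/
def InclusiveSetCoverYes {ι : Type*} (n : ℕ) (S : ι → Finset ℕ) (k : ℕ) : Prop :=
  ∃ (R : Finset ι) (f : {p : ℕ × ι // p.2 ∈ R ∧ p.1 ∈ S p.2} → {u : ℕ // u ∈ Finset.Icc 1 n}),
    R.card ≤ k ∧ Function.Surjective f ∧ ∀ p, (f p : ℕ) ≤ p.1.1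

/-- A minor embedding of `P` in `T`: a surjective `f : V(T) → V(P)` with connected preimages
of vertices such that every edge of `P` is realized by an edge of `T`. -/
def IsMinorEmbedding {V W : Type*} (T : SimpleGraph V) (P : SimpleGraph W) (f : V → W) : Prop :=
  Function.Surjective f ∧
  (∀ w : W, ((T.induce (f ⁻¹' {w})).Connected)) ∧
  (∀ ⦃u v : W⦄, P.Adj u v → ∃ u' v', T.Adj u' v' ∧ f u' = u ∧ f v' = v)

/-- Vertices of the pattern tree `P`: a center `p` with `3n⁴` pendant leaves, adjacent to the
centers of stars `R_1,…,R_n` (`R_i` having `i` leaves, the index `i : Fin n` standing for the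
1-based value `i+1`), `X_1,…,X_{m−k}` (each with `n³` leaves), and `Y_1,…,Y_k` (each with `n²`
leaves). -/
inductive PVert (n m k : ℕ) : Type
  | p : PVert n m k
  | pleaf : Fin (3*n^4) → PVert n m k
  | rcenter : Fin n → PVert n m k
  | rleaf : (i : Fin n) → Fin (i.val + 1) → PVert n m k
  | xcenter : Fin (m - k) → PVert n m k
  | xleaf : Fin (m - k) → Fin (n^3) → PVert n m k
  | ycenter : Fin k → PVert n m k
  | yleaf : Fin k → Fin (n^2) → PVert n m k

/-- Base adjacency relation for the tree `P`. -/
def PRel (n m k : ℕ) : PVert n m k → PVert n m k → Prop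
  | .p, .pleaf _ => True
  | .p, .rcenter _ => True
  | .p, .xcenter _ => True
  | .p, .ycenter _ => True
  | .rcenter i, .rleaf i' _ => i = i'
  | .xcenter i, .xleaf i' _ => i = i'
  | .ycenter i, .yleaf i' _ => i = i'
  | _, _ => False

/-- The tree `P`. -/
def Pgraph (n m k : ℕ) : SimpleGraph (PVert n m k) := SimpleGraph.fromRel (PRel n m k)

/-- Vertices of the host tree `T`: a center `t` with `3n⁴` pendant leaves, adjacent to
`t_1,…,t_m`, where each `t_i` has `n³` pendant leaves, for every `s ∈ S_i` a neighbour which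
is the center of a star with `s` leaves, and one further neighbour which is the center of a
star with `n²` leaves. -/
inductive TVert (n m : ℕ) (S : Fin m → Finset ℕ) : Type
  | t : TVert n m S
  | tleaf : Fin (3*n^4) → TVert n m S
  | ti : Fin m → TVert n m S
  | tileaf : Fin m → Fin (n^3) → TVert n m S
  | scenter : (i : Fin m) → {s : ℕ // s ∈ S i} → TVert n m S
  | sleaf : (i : Fin m) → (s : {s : ℕ // s ∈ S i}) → Fin s.val → TVert n m S
  | ycenter : Fin m → TVert n m S
  | yleaf : Fin m → Fin (n^2) → TVert n m S

/-- Base adjacency relation for the tree `T`. -/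
def TRel (n m : ℕ) (S : Fin m → Finset ℕ) : TVert n m S → TVert n m S → Prop
  | .t, .tleaf _ => True
  | .t, .ti _ => True
  | .ti i, .tileaf i' _ => i = i'
  | .ti i, .scenter i' _ => i = i'
  | .ti i, .ycenter i' => i = i'
  | .scenter i s, .sleaf i' s' _ => i = i' ∧ (s : ℕ) = (s' : ℕ)
  | .ycenter i, .yleaf i' _ => i = i'
  | _, _ => False

/-- The tree `T`. -/
def Tgraph (n m : ℕ) (S : Fin m → Finset ℕ) : SimpleGraph (TVert n m S) :=
  SimpleGraph.fromRel (TRel n m S)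

section Key
variable {n m k : ℕ} (S : Fin m → Finset ℕ) (R' : Finset (Fin m))
  (σ : {i : Fin m // i ∈ R'ᶜ} ≃ Fin (m - k)) (τ : {i : Fin m // i ∈ R'} ≃ Fin k)
  (pair : Fin n → ℕ × Fin m)

noncomputable def gmap : TVert n m S → PVert n m k
  | .t => .p
  | .tleaf j => .pleaf j
  | .ti i => if h : i ∈ R'ᶜ then .xcenter (σ ⟨i, h⟩) else .p
  | .tileaf i a => if h : i ∈ R'ᶜ then .xleaf (σ ⟨i, h⟩) a else .p
  | .scenter i s =>
      if h : i ∈ R'ᶜ then .xcenter (σ ⟨i, h⟩)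
      else if h2 : ∃ u, pair u = ((s : ℕ), i) then .rcenter h2.choose else .p
  | .sleaf i s a =>
      if h : i ∈ R'ᶜ then .xcenter (σ ⟨i, h⟩)
      else if h2 : ∃ u, pair u = ((s : ℕ), i) then
        if ha : (a : ℕ) < h2.choose.val + 1 then .rleaf h2.choose ⟨a, ha⟩
        else .rcenter h2.choose
      else .p
  | .ycenter i =>
      if h : i ∈ R'ᶜ then .xcenter (σ ⟨i, h⟩)
      else .ycenter (τ ⟨i, by simpa using h⟩)
  | .yleaf i a =>
      if h : i ∈ R'ᶜ then .xcenter (σ ⟨i, h⟩)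
      else .yleaf (τ ⟨i, by simpa using h⟩) a


-- computation lemmas
variable (hmemR : ∀ u, (pair u).2 ∈ R')
  (hmemS : ∀ u, (pair u).1 ∈ S (pair u).2)
  (hge : ∀ u : Fin n, u.val + 1 ≤ (pair u).1)
  (hinj : Function.Injective pair)

include hmemR hinj in
lemma gsc_pair (u : Fin n) (hm : (pair u).1 ∈ S (pair u).2) :
    gmap S R' σ τ pair (.scenter (pair u).2 ⟨(pair u).1, hm⟩) = .rcenter u := by
  have h2 : ∃ u', pair u' = (((⟨(pair u).1, hm⟩ : {s // s ∈ S (pair u).2}) : ℕ), (pair u).2) :=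
    ⟨u, by simp⟩
  simp only [gmap]
  rw [dif_neg (by simp [hmemR u]), dif_pos h2]
  exact congrArg _ (hinj (h2.choose_spec.trans (by simp)))

include hmemR hinj in
lemma gsl_pair (u : Fin n) (hm : (pair u).1 ∈ S (pair u).2) (a : Fin (pair u).1) :
    gmap S R' σ τ pair (.sleaf (pair u).2 ⟨(pair u).1, hm⟩ a) =
      if ha : (a : ℕ) < u.val + 1 then .rleaf u ⟨a, ha⟩ else .rcenter u := by
  have h2 : ∃ u', pair u' = (((⟨(pair u).1, hm⟩ : {s // s ∈ S (pair u).2}) : ℕ), (pair u).2) :=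
    ⟨u, by simp⟩
  have hcu : h2.choose = u := hinj (h2.choose_spec.trans (by simp))
  simp only [gmap]
  rw [dif_neg (by simp [hmemR u]), dif_pos h2]
  have gen : ∀ (w : Fin n) (_ : w = u),
      (if ha : (a : ℕ) < w.val + 1 then PVert.rleaf (n := n) (m := m) (k := k) w ⟨a, ha⟩
        else .rcenter w) =
      (if ha : (a : ℕ) < u.val + 1 then .rleaf u ⟨a, ha⟩ else .rcenter u) := by
    rintro w rfl; rfl
  exact gen _ hcu

lemma gyc_in (i : Fin m) (h : i ∈ R') :
    gmap S R' σ τ pair (.ycenter i) = .ycenter (τ ⟨i, h⟩) := by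
  simp only [gmap]; rw [dif_neg (by simp [h])]

lemma gyl_in (i : Fin m) (h : i ∈ R') (a : Fin (n^2)) :
    gmap S R' σ τ pair (.yleaf i a) = .yleaf (τ ⟨i, h⟩) a := by
  simp only [gmap]; rw [dif_neg (by simp [h])]

lemma gti_in (i : Fin m) (h : i ∈ R') : gmap S R' σ τ pair (.ti i) = .p := by
  simp only [gmap]; rw [dif_neg (by simp [h])]


include hmemR hmemS hge hinj in
lemma edge_real : ∀ u v : PVert n m k, PRel n m k u v →
    ∃ a b, (Tgraph n m S).Adj a b ∧ gmap S R' σ τ pair a = u ∧ gmap S R' σ τ pair b = v := by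
  have adjT : ∀ {a b : TVert n m S}, a ≠ b → TRel n m S a b → (Tgraph n m S).Adj a b :=
    fun h1 h2 => by rw [Tgraph, SimpleGraph.fromRel_adj]; exact ⟨h1, Or.inl h2⟩
  intro u v h
  cases u <;> cases v <;> simp only [PRel] at h
  case p.pleaf j =>
    exact ⟨.t, .tleaf j, adjT (by simp) trivial, rfl, rfl⟩
  case p.rcenter u₀ =>
    refine ⟨.ti (pair u₀).2, .scenter (pair u₀).2 ⟨(pair u₀).1, hmemS u₀⟩,
      adjT (by simp) rfl, gti_in _ _ σ τ _ _ (hmemR u₀), gsc_pair S R' σ τ pair hmemR hinj u₀ _⟩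
  case p.xcenter j =>
    refine ⟨.t, .ti (σ.symm j).1, adjT (by simp) trivial, rfl, ?_⟩
    simp only [gmap]
    rw [dif_pos (σ.symm j).2]
    simp
  case p.ycenter j =>
    refine ⟨.ti (τ.symm j).1, .ycenter (τ.symm j).1, adjT (by simp) rfl,
      gti_in _ _ σ τ _ _ (τ.symm j).2, ?_⟩
    rw [gyc_in _ _ σ τ _ _ (τ.symm j).2]
    simp
  case rcenter.rleaf u₀ u₁ a =>
    subst h
    have hlt : (a : ℕ) < (pair u₀).1 := lt_of_lt_of_le a.isLt (hge u₀)
    refine ⟨.scenter (pair u₀).2 ⟨(pair u₀).1, hmemS u₀⟩,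
      .sleaf (pair u₀).2 ⟨(pair u₀).1, hmemS u₀⟩ ⟨a, hlt⟩,
      adjT (by simp) ⟨rfl, rfl⟩, gsc_pair S R' σ τ pair hmemR hinj u₀ _, ?_⟩
    rw [gsl_pair S R' σ τ pair hmemR hinj u₀ _ ⟨a, hlt⟩]
    rw [dif_pos (show ((⟨a, hlt⟩ : Fin (pair u₀).1) : ℕ) < u₀.val + 1 from a.isLt)]
  case xcenter.xleaf j j' a =>
    subst h
    refine ⟨.ti (σ.symm j).1, .tileaf (σ.symm j).1 a, adjT (by simp) rfl, ?_, ?_⟩ <;>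
      · simp only [gmap]; rw [dif_pos (σ.symm j).2]; simp
  case ycenter.yleaf j j' a =>
    subst h
    refine ⟨.ycenter (τ.symm j).1, .yleaf (τ.symm j).1 a, adjT (by simp) rfl, ?_, ?_⟩
    · rw [gyc_in _ _ σ τ _ _ (τ.symm j).2]; simp
    · rw [gyl_in _ _ σ τ _ _ (τ.symm j).2]; simp

include hmemR hmemS hge hinj in
lemma gsurj : Function.Surjective (gmap S R' σ τ pair) := by
  have ieqs : ∀ {i : Fin m} (hc : i ∈ R'ᶜ) {j : Fin (m - k)}, σ ⟨i, hc⟩ = j →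
      i = ((σ.symm j : {i : Fin m // i ∈ R'ᶜ}) : Fin m) := by
    intro i hc j e
    have h : (⟨i, hc⟩ : {i : Fin m // i ∈ R'ᶜ}) = σ.symm j := by
      rw [← e, Equiv.symm_apply_apply]
    exact congrArg Subtype.val h
  have ieqt : ∀ {i : Fin m} (hi : i ∈ R') {j : Fin k}, τ ⟨i, hi⟩ = j →
      i = ((τ.symm j : {i : Fin m // i ∈ R'}) : Fin m) := by
    intro i hi j e
    have h : (⟨i, hi⟩ : {i : Fin m // i ∈ R'}) = τ.symm j := by
      rw [← e, Equiv.symm_apply_apply]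
    exact congrArg Subtype.val h
  intro w
  cases w with
  | p => exact ⟨.t, rfl⟩
  | pleaf j => exact ⟨.tleaf j, rfl⟩
  | rcenter u => exact ⟨_, gsc_pair S R' σ τ pair hmemR hinj u (hmemS u)⟩
  | rleaf u a =>
    have hlt : (a : ℕ) < (pair u).1 := lt_of_lt_of_le a.isLt (hge u)
    refine ⟨.sleaf (pair u).2 ⟨(pair u).1, hmemS u⟩ ⟨a, hlt⟩, ?_⟩
    rw [gsl_pair S R' σ τ pair hmemR hinj u _ ⟨a, hlt⟩,
      dif_pos (show ((⟨a, hlt⟩ : Fin (pair u).1) : ℕ) < u.val + 1 from a.isLt)]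
  | xcenter j =>
    refine ⟨.ti (σ.symm j).1, ?_⟩
    simp only [gmap]; rw [dif_pos (σ.symm j).2]; simp
  | xleaf j a =>
    refine ⟨.tileaf (σ.symm j).1 a, ?_⟩
    simp only [gmap]; rw [dif_pos (σ.symm j).2]; simp
  | ycenter j => exact ⟨.ycenter (τ.symm j).1, by rw [gyc_in _ _ σ τ _ _ (τ.symm j).2]; simp⟩
  | yleaf j a => exact ⟨.yleaf (τ.symm j).1 a, by rw [gyl_in _ _ σ τ _ _ (τ.symm j).2]; simp⟩


lemma inv_ti (i : Fin m) (w : PVert n m k) (h : gmap S R' σ τ pair (.ti i) = w) :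
    (∃ hc : i ∈ R'ᶜ, w = .xcenter (σ ⟨i, hc⟩)) ∨ (i ∈ R' ∧ w = .p) := by
  simp only [gmap] at h
  by_cases hc : i ∈ R'ᶜ
  · rw [dif_pos hc] at h; exact Or.inl ⟨hc, h.symm⟩
  · rw [dif_neg hc] at h; exact Or.inr ⟨by simpa using hc, h.symm⟩

lemma inv_tileaf (i : Fin m) (a : Fin (n^3)) (w : PVert n m k)
    (h : gmap S R' σ τ pair (.tileaf i a) = w) :
    (∃ hc : i ∈ R'ᶜ, w = .xleaf (σ ⟨i, hc⟩) a) ∨ (i ∈ R' ∧ w = .p) := by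
  simp only [gmap] at h
  by_cases hc : i ∈ R'ᶜ
  · rw [dif_pos hc] at h; exact Or.inl ⟨hc, h.symm⟩
  · rw [dif_neg hc] at h; exact Or.inr ⟨by simpa using hc, h.symm⟩

lemma inv_scenter (i : Fin m) (s : {s : ℕ // s ∈ S i}) (w : PVert n m k)
    (h : gmap S R' σ τ pair (.scenter i s) = w) :
    (∃ hc : i ∈ R'ᶜ, w = .xcenter (σ ⟨i, hc⟩)) ∨
    (i ∈ R' ∧ ∃ u, pair u = ((s : ℕ), i) ∧ w = .rcenter u) ∨
    (i ∈ R' ∧ ¬ (∃ u, pair u = ((s : ℕ), i)) ∧ w = .p) := by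
  simp only [gmap] at h
  by_cases hc : i ∈ R'ᶜ
  · rw [dif_pos hc] at h; exact Or.inl ⟨hc, h.symm⟩
  rw [dif_neg hc] at h
  by_cases h2 : ∃ u, pair u = ((s : ℕ), i)
  · rw [dif_pos h2] at h
    exact Or.inr (Or.inl ⟨by simpa using hc, h2.choose, h2.choose_spec, h.symm⟩)
  · rw [dif_neg h2] at h
    exact Or.inr (Or.inr ⟨by simpa using hc, h2, h.symm⟩)

lemma inv_sleaf (i : Fin m) (s : {s : ℕ // s ∈ S i}) (a : Fin (s : ℕ)) (w : PVert n m k)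
    (h : gmap S R' σ τ pair (.sleaf i s a) = w) :
    (∃ hc : i ∈ R'ᶜ, w = .xcenter (σ ⟨i, hc⟩)) ∨
    (i ∈ R' ∧ ∃ u, pair u = ((s : ℕ), i) ∧
      ((∃ ha : (a : ℕ) < u.val + 1, w = .rleaf u ⟨a, ha⟩) ∨ w = .rcenter u)) ∨
    (i ∈ R' ∧ ¬ (∃ u, pair u = ((s : ℕ), i)) ∧ w = .p) := by
  simp only [gmap] at h
  by_cases hc : i ∈ R'ᶜ
  · rw [dif_pos hc] at h; exact Or.inl ⟨hc, h.symm⟩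
  rw [dif_neg hc] at h
  by_cases h2 : ∃ u, pair u = ((s : ℕ), i)
  · rw [dif_pos h2] at h
    by_cases ha : (a : ℕ) < h2.choose.val + 1
    · rw [dif_pos ha] at h
      exact Or.inr (Or.inl ⟨by simpa using hc, h2.choose, h2.choose_spec,
        Or.inl ⟨ha, h.symm⟩⟩)
    · rw [dif_neg ha] at h
      exact Or.inr (Or.inl ⟨by simpa using hc, h2.choose, h2.choose_spec, Or.inr h.symm⟩)
  · rw [dif_neg h2] at h
    exact Or.inr (Or.inr ⟨by simpa using hc, h2, h.symm⟩)

lemma inv_ycenter (i : Fin m) (w : PVert n m k) (h : gmap S R' σ τ pair (.ycenter i) = w) :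
    (∃ hc : i ∈ R'ᶜ, w = .xcenter (σ ⟨i, hc⟩)) ∨
    (∃ hi : i ∈ R', w = .ycenter (τ ⟨i, hi⟩)) := by
  simp only [gmap] at h
  by_cases hc : i ∈ R'ᶜ
  · rw [dif_pos hc] at h; exact Or.inl ⟨hc, h.symm⟩
  · rw [dif_neg hc] at h; exact Or.inr ⟨by simpa using hc, h.symm⟩

lemma inv_yleaf (i : Fin m) (a : Fin (n^2)) (w : PVert n m k)
    (h : gmap S R' σ τ pair (.yleaf i a) = w) :
    (∃ hc : i ∈ R'ᶜ, w = .xcenter (σ ⟨i, hc⟩)) ∨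
    (∃ hi : i ∈ R', w = .yleaf (τ ⟨i, hi⟩) a) := by
  simp only [gmap] at h
  by_cases hc : i ∈ R'ᶜ
  · rw [dif_pos hc] at h; exact Or.inl ⟨hc, h.symm⟩
  · rw [dif_neg hc] at h; exact Or.inr ⟨by simpa using hc, h.symm⟩


section Conn
lemma conn_root {V : Type*} (G : SimpleGraph V) (s : Set V) (r : V) (hr : r ∈ s)
    (h : ∀ v (hv : v ∈ s), (G.induce s).Reachable ⟨v, hv⟩ ⟨r, hr⟩) :
    (G.induce s).Connected := by
  have : Nonempty s := ⟨⟨r, hr⟩⟩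
  exact ⟨fun u v => (h u.1 u.2).trans (h v.1 v.2).symm⟩
end Conn

include hmemR hmemS hge hinj in
lemma gconn : ∀ w : PVert n m k,
    ((Tgraph n m S).induce (gmap S R' σ τ pair ⁻¹' {w})).Connected := by
  have adjT : ∀ (a b : TVert n m S), a ≠ b → (TRel n m S a b ∨ TRel n m S b a) →
      (Tgraph n m S).Adj a b :=
    fun a b h1 h2 => by rw [Tgraph, SimpleGraph.fromRel_adj]; exact ⟨h1, h2⟩
  have step : ∀ {st : Set (TVert n m S)} (a b : TVert n m S) (ha : a ∈ st) (hb : b ∈ st),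
      a ≠ b → (TRel n m S a b ∨ TRel n m S b a) →
      ((Tgraph n m S).induce st).Reachable ⟨a, ha⟩ ⟨b, hb⟩ :=
    fun a b ha hb h1 h2 => SimpleGraph.Adj.reachable (adjT a b h1 h2)
  have reach_of_eq : ∀ {st : Set (TVert n m S)} {a b : TVert n m S}
      (ha : a ∈ st) (hb : b ∈ st), a = b →
      ((Tgraph n m S).induce st).Reachable ⟨a, ha⟩ ⟨b, hb⟩ := by
    rintro st a b ha hb rfl; exact SimpleGraph.Reachable.refl _
  have ieqs : ∀ {i : Fin m} (hc : i ∈ R'ᶜ) {j : Fin (m - k)}, σ ⟨i, hc⟩ = j →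
      i = ((σ.symm j : {i : Fin m // i ∈ R'ᶜ}) : Fin m) := by
    intro i hc j e
    have h : (⟨i, hc⟩ : {i : Fin m // i ∈ R'ᶜ}) = σ.symm j := by
      rw [← e, Equiv.symm_apply_apply]
    exact congrArg Subtype.val h
  have ieqt : ∀ {i : Fin m} (hi : i ∈ R') {j : Fin k}, τ ⟨i, hi⟩ = j →
      i = ((τ.symm j : {i : Fin m // i ∈ R'}) : Fin m) := by
    intro i hi j e
    have h : (⟨i, hi⟩ : {i : Fin m // i ∈ R'}) = τ.symm j := by
      rw [← e, Equiv.symm_apply_apply]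
    exact congrArg Subtype.val h
  intro w
  cases w with
  | p =>
    have ht_mem : TVert.t ∈ gmap S R' σ τ pair ⁻¹' {PVert.p} := rfl
    refine conn_root _ _ .t ht_mem ?_
    intro v hv
    cases v with
    | t => exact SimpleGraph.Reachable.refl _
    | tleaf j => exact nomatch (hv : _ = _)
    | ti i =>
      rcases inv_ti S R' σ τ pair i _ hv with ⟨hc, he⟩ | ⟨hi, _⟩
      · exact nomatch he
      · exact step (.ti i) .t hv ht_mem (by simp) (Or.inr trivial)
    | tileaf i a =>
      rcases inv_tileaf S R' σ τ pair i a _ hv with ⟨hc, he⟩ | ⟨hi, _⟩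
      · exact nomatch he
      · have hti : TVert.ti i ∈ gmap S R' σ τ pair ⁻¹' {PVert.p} := gti_in S R' σ τ pair i hi
        exact (step (.tileaf i a) (.ti i) hv hti (by simp) (Or.inr rfl)).trans
          (step (.ti i) .t hti ht_mem (by simp) (Or.inr trivial))
    | scenter i s =>
      rcases inv_scenter S R' σ τ pair i s _ hv with ⟨hc, he⟩ | ⟨hi, u, hp, he⟩ | ⟨hi, h2, _⟩
      · exact nomatch he
      · exact nomatch he
      · have hti : TVert.ti i ∈ gmap S R' σ τ pair ⁻¹' {PVert.p} := gti_in S R' σ τ pair i hi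
        exact (step (.scenter i s) (.ti i) hv hti (by simp) (Or.inr rfl)).trans
          (step (.ti i) .t hti ht_mem (by simp) (Or.inr trivial))
    | sleaf i s a =>
      rcases inv_sleaf S R' σ τ pair i s a _ hv with
        ⟨hc, he⟩ | ⟨hi, u, hp, ⟨ha, he⟩ | he⟩ | ⟨hi, h2, _⟩
      · exact nomatch he
      · exact nomatch he
      · exact nomatch he
      · have hsc : TVert.scenter i s ∈ gmap S R' σ τ pair ⁻¹' {PVert.p} := by
          show gmap S R' σ τ pair (.scenter i s) = .p
          simp only [gmap]; rw [dif_neg (by simpa using hi), dif_neg h2]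
        have hti : TVert.ti i ∈ gmap S R' σ τ pair ⁻¹' {PVert.p} := gti_in S R' σ τ pair i hi
        exact ((step (.sleaf i s a) (.scenter i s) hv hsc (by simp) (Or.inr ⟨rfl, rfl⟩)).trans
          (step (.scenter i s) (.ti i) hsc hti (by simp) (Or.inr rfl))).trans
          (step (.ti i) .t hti ht_mem (by simp) (Or.inr trivial))
    | ycenter i =>
      rcases inv_ycenter S R' σ τ pair i _ hv with ⟨hc, he⟩ | ⟨hi, he⟩ <;>
        exact nomatch he
    | yleaf i a =>
      rcases inv_yleaf S R' σ τ pair i a _ hv with ⟨hc, he⟩ | ⟨hi, he⟩ <;>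
        exact nomatch he
  | pleaf j =>
    refine conn_root _ _ (.tleaf j) rfl ?_
    intro v hv
    cases v with
    | tleaf j' =>
      have hv' : PVert.pleaf (n := n) (m := m) (k := k) j' = .pleaf j := hv
      injection hv' with h1
      subst h1
      exact SimpleGraph.Reachable.refl _
    | t => exact nomatch (hv : _ = _)
    | ti i =>
      rcases inv_ti S R' σ τ pair i _ hv with ⟨hc, he⟩ | ⟨hi, he⟩ <;> exact nomatch he
    | tileaf i a =>
      rcases inv_tileaf S R' σ τ pair i a _ hv with ⟨hc, he⟩ | ⟨hi, he⟩ <;>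
        exact nomatch he
    | scenter i s =>
      rcases inv_scenter S R' σ τ pair i s _ hv with ⟨hc, he⟩ | ⟨hi, u, hp, he⟩ | ⟨hi, h2, he⟩ <;>
        exact nomatch he
    | sleaf i s a =>
      rcases inv_sleaf S R' σ τ pair i s a _ hv with
        ⟨hc, he⟩ | ⟨hi, u, hp, ⟨ha, he⟩ | he⟩ | ⟨hi, h2, he⟩ <;> exact nomatch he
    | ycenter i =>
      rcases inv_ycenter S R' σ τ pair i _ hv with ⟨hc, he⟩ | ⟨hi, he⟩ <;>
        exact nomatch he
    | yleaf i a =>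
      rcases inv_yleaf S R' σ τ pair i a _ hv with ⟨hc, he⟩ | ⟨hi, he⟩ <;>
        exact nomatch he
  | rcenter u =>
    have hroot : TVert.scenter (pair u).2 ⟨(pair u).1, hmemS u⟩ ∈
        gmap S R' σ τ pair ⁻¹' {PVert.rcenter u} := gsc_pair S R' σ τ pair hmemR hinj u (hmemS u)
    refine conn_root _ _ _ hroot ?_
    have eqroot : ∀ (i : Fin m) (s : {s : ℕ // s ∈ S i}), pair u = ((s : ℕ), i) →
        TVert.scenter (n := n) (S := S) i s = .scenter (pair u).2 ⟨(pair u).1, hmemS u⟩ := by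
      intro i s hp
      have e2 : (pair u).2 = i := congrArg Prod.snd hp
      subst e2
      have e1 : (pair u).1 = (s : ℕ) := congrArg Prod.fst hp
      exact congrArg _ (Subtype.ext e1.symm)
    intro v hv
    cases v with
    | t => exact nomatch (hv : _ = _)
    | tleaf j => exact nomatch (hv : _ = _)
    | ti i =>
      rcases inv_ti S R' σ τ pair i _ hv with ⟨hc, he⟩ | ⟨hi, he⟩ <;> exact nomatch he
    | tileaf i a =>
      rcases inv_tileaf S R' σ τ pair i a _ hv with ⟨hc, he⟩ | ⟨hi, he⟩ <;>
        exact nomatch he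
    | scenter i s =>
      rcases inv_scenter S R' σ τ pair i s _ hv with ⟨hc, he⟩ | ⟨hi, u', hp, he⟩ | ⟨hi, h2, he⟩
      · exact nomatch he
      · injection he with h1
        subst h1
        exact reach_of_eq hv hroot (eqroot i s hp)
      · exact nomatch he
    | sleaf i s a =>
      rcases inv_sleaf S R' σ τ pair i s a _ hv with
        ⟨hc, he⟩ | ⟨hi, u', hp, ⟨ha, he⟩ | he⟩ | ⟨hi, h2, he⟩
      · exact nomatch he
      · exact nomatch he
      · injection he with h1
        subst h1
        have hsc : TVert.scenter i s ∈ gmap S R' σ τ pair ⁻¹' {PVert.rcenter u} := by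
          show gmap S R' σ τ pair (.scenter i s) = .rcenter u
          have h2 : ∃ u', pair u' = ((s : ℕ), i) := ⟨u, hp⟩
          simp only [gmap]; rw [dif_neg (by simpa using hi), dif_pos h2]
          exact congrArg _ (hinj (h2.choose_spec.trans hp.symm))
        exact (step (.sleaf i s a) (.scenter i s) hv hsc (by simp) (Or.inr ⟨rfl, rfl⟩)).trans
          (reach_of_eq hsc hroot (eqroot i s hp))
      · exact nomatch he
    | ycenter i =>
      rcases inv_ycenter S R' σ τ pair i _ hv with ⟨hc, he⟩ | ⟨hi, he⟩ <;>
        exact nomatch he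
    | yleaf i a =>
      rcases inv_yleaf S R' σ τ pair i a _ hv with ⟨hc, he⟩ | ⟨hi, he⟩ <;>
        exact nomatch he
  | rleaf u a =>
    have hlt : (a : ℕ) < (pair u).1 := lt_of_lt_of_le a.isLt (hge u)
    have hroot : TVert.sleaf (pair u).2 ⟨(pair u).1, hmemS u⟩ ⟨(a : ℕ), hlt⟩ ∈
        gmap S R' σ τ pair ⁻¹' {PVert.rleaf u a} := by
      show gmap S R' σ τ pair _ = _
      rw [gsl_pair S R' σ τ pair hmemR hinj u (hmemS u) ⟨(a : ℕ), hlt⟩,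
        dif_pos (show (((⟨(a : ℕ), hlt⟩ : Fin (pair u).1)) : ℕ) < u.val + 1 from a.isLt)]
    refine conn_root _ _ _ hroot ?_
    intro v hv
    cases v with
    | t => exact nomatch (hv : _ = _)
    | tleaf j => exact nomatch (hv : _ = _)
    | ti i =>
      rcases inv_ti S R' σ τ pair i _ hv with ⟨hc, he⟩ | ⟨hi, he⟩ <;> exact nomatch he
    | tileaf i a' =>
      rcases inv_tileaf S R' σ τ pair i a' _ hv with ⟨hc, he⟩ | ⟨hi, he⟩ <;>
        exact nomatch he
    | scenter i s =>
      rcases inv_scenter S R' σ τ pair i s _ hv with ⟨hc, he⟩ | ⟨hi, u', hp, he⟩ | ⟨hi, h2, he⟩ <;>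
        exact nomatch he
    | sleaf i s b =>
      rcases inv_sleaf S R' σ τ pair i s b _ hv with
        ⟨hc, he⟩ | ⟨hi, u', hp, ⟨hb, he⟩ | he⟩ | ⟨hi, h2, he⟩
      · exact nomatch he
      · injection he with h1 h2'
        subst h1
        have hba : (a : ℕ) = (b : ℕ) := congrArg Fin.val (eq_of_heq h2')
        refine reach_of_eq hv hroot ?_
        have e2 : (pair u).2 = i := congrArg Prod.snd hp
        subst e2
        have e1 : (pair u).1 = (s : ℕ) := congrArg Prod.fst hp
        obtain ⟨sv, hsv⟩ := s
        subst e1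
        exact congrArg _ (Fin.ext hba.symm)
      · exact nomatch he
      · exact nomatch he
    | ycenter i =>
      rcases inv_ycenter S R' σ τ pair i _ hv with ⟨hc, he⟩ | ⟨hi, he⟩ <;>
        exact nomatch he
    | yleaf i a' =>
      rcases inv_yleaf S R' σ τ pair i a' _ hv with ⟨hc, he⟩ | ⟨hi, he⟩ <;>
        exact nomatch he
  | xcenter j =>
    have hroot : TVert.ti ((σ.symm j : {i : Fin m // i ∈ R'ᶜ}) : Fin m) ∈
        gmap S R' σ τ pair ⁻¹' {PVert.xcenter j} := by
      show gmap S R' σ τ pair _ = _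
      simp only [gmap]; rw [dif_pos (σ.symm j).2]; simp
    refine conn_root _ _ _ hroot ?_
    intro v hv
    cases v with
    | t => exact nomatch (hv : _ = _)
    | tleaf j' => exact nomatch (hv : _ = _)
    | ti i =>
      rcases inv_ti S R' σ τ pair i _ hv with ⟨hc, he⟩ | ⟨hi, he⟩
      · injection he with e
        exact reach_of_eq hv hroot (congrArg _ (ieqs hc e.symm))
      · exact nomatch he
    | tileaf i a =>
      rcases inv_tileaf S R' σ τ pair i a _ hv with ⟨hc, he⟩ | ⟨hi, he⟩ <;>
        exact nomatch he
    | scenter i s =>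
      rcases inv_scenter S R' σ τ pair i s _ hv with ⟨hc, he⟩ | ⟨hi, u', hp, he⟩ | ⟨hi, h2, he⟩
      · injection he with e
        have hti : TVert.ti i ∈ gmap S R' σ τ pair ⁻¹' {PVert.xcenter j} := by
          show gmap S R' σ τ pair _ = _
          simp only [gmap]; rw [dif_pos hc, ← e]
        exact (step (.scenter i s) (.ti i) hv hti (by simp) (Or.inr rfl)).trans
          (reach_of_eq hti hroot (congrArg _ (ieqs hc e.symm)))
      · exact nomatch he
      · exact nomatch he
    | sleaf i s b =>
      rcases inv_sleaf S R' σ τ pair i s b _ hv with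
        ⟨hc, he⟩ | ⟨hi, u', hp, ⟨hb, he⟩ | he⟩ | ⟨hi, h2, he⟩
      · injection he with e
        have hsc : TVert.scenter i s ∈ gmap S R' σ τ pair ⁻¹' {PVert.xcenter j} := by
          show gmap S R' σ τ pair _ = _
          simp only [gmap]; rw [dif_pos hc, ← e]
        have hti : TVert.ti i ∈ gmap S R' σ τ pair ⁻¹' {PVert.xcenter j} := by
          show gmap S R' σ τ pair _ = _
          simp only [gmap]; rw [dif_pos hc, ← e]
        exact ((step (.sleaf i s b) (.scenter i s) hv hsc (by simp) (Or.inr ⟨rfl, rfl⟩)).trans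
          (step (.scenter i s) (.ti i) hsc hti (by simp) (Or.inr rfl))).trans
          (reach_of_eq hti hroot (congrArg _ (ieqs hc e.symm)))
      · exact nomatch he
      · exact nomatch he
      · exact nomatch he
    | ycenter i =>
      rcases inv_ycenter S R' σ τ pair i _ hv with ⟨hc, he⟩ | ⟨hi, he⟩
      · injection he with e
        have hti : TVert.ti i ∈ gmap S R' σ τ pair ⁻¹' {PVert.xcenter j} := by
          show gmap S R' σ τ pair _ = _
          simp only [gmap]; rw [dif_pos hc, ← e]
        exact (step (.ycenter i) (.ti i) hv hti (by simp) (Or.inr rfl)).trans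
          (reach_of_eq hti hroot (congrArg _ (ieqs hc e.symm)))
      · exact nomatch he
    | yleaf i b =>
      rcases inv_yleaf S R' σ τ pair i b _ hv with ⟨hc, he⟩ | ⟨hi, he⟩
      · injection he with e
        have hyc : TVert.ycenter i ∈ gmap S R' σ τ pair ⁻¹' {PVert.xcenter j} := by
          show gmap S R' σ τ pair _ = _
          simp only [gmap]; rw [dif_pos hc, ← e]
        have hti : TVert.ti i ∈ gmap S R' σ τ pair ⁻¹' {PVert.xcenter j} := by
          show gmap S R' σ τ pair _ = _
          simp only [gmap]; rw [dif_pos hc, ← e]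
        exact ((step (.yleaf i b) (.ycenter i) hv hyc (by simp) (Or.inr rfl)).trans
          (step (.ycenter i) (.ti i) hyc hti (by simp) (Or.inr rfl))).trans
          (reach_of_eq hti hroot (congrArg _ (ieqs hc e.symm)))
      · exact nomatch he
  | xleaf j b =>
    have hroot : TVert.tileaf ((σ.symm j : {i : Fin m // i ∈ R'ᶜ}) : Fin m) b ∈
        gmap S R' σ τ pair ⁻¹' {PVert.xleaf j b} := by
      show gmap S R' σ τ pair _ = _
      simp only [gmap]; rw [dif_pos (σ.symm j).2]; simp
    refine conn_root _ _ _ hroot ?_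
    intro v hv
    cases v with
    | t => exact nomatch (hv : _ = _)
    | tleaf j' => exact nomatch (hv : _ = _)
    | ti i =>
      rcases inv_ti S R' σ τ pair i _ hv with ⟨hc, he⟩ | ⟨hi, he⟩ <;> exact nomatch he
    | tileaf i a =>
      rcases inv_tileaf S R' σ τ pair i a _ hv with ⟨hc, he⟩ | ⟨hi, he⟩
      · injection he with e1 e2
        subst e2
        exact reach_of_eq hv hroot (congrArg (fun x => TVert.tileaf x _) (ieqs hc e1.symm))
      · exact nomatch he
    | scenter i s =>
      rcases inv_scenter S R' σ τ pair i s _ hv with ⟨hc, he⟩ | ⟨hi, u', hp, he⟩ | ⟨hi, h2, he⟩ <;>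
        exact nomatch he
    | sleaf i s b' =>
      rcases inv_sleaf S R' σ τ pair i s b' _ hv with
        ⟨hc, he⟩ | ⟨hi, u', hp, ⟨hb, he⟩ | he⟩ | ⟨hi, h2, he⟩ <;> exact nomatch he
    | ycenter i =>
      rcases inv_ycenter S R' σ τ pair i _ hv with ⟨hc, he⟩ | ⟨hi, he⟩ <;>
        exact nomatch he
    | yleaf i a =>
      rcases inv_yleaf S R' σ τ pair i a _ hv with ⟨hc, he⟩ | ⟨hi, he⟩ <;>
        exact nomatch he
  | ycenter j =>
    have hroot : TVert.ycenter ((τ.symm j : {i : Fin m // i ∈ R'}) : Fin m) ∈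
        gmap S R' σ τ pair ⁻¹' {PVert.ycenter j} := by
      show gmap S R' σ τ pair _ = _
      rw [gyc_in S R' σ τ pair _ (τ.symm j).2]; simp
    refine conn_root _ _ _ hroot ?_
    intro v hv
    cases v with
    | t => exact nomatch (hv : _ = _)
    | tleaf j' => exact nomatch (hv : _ = _)
    | ti i =>
      rcases inv_ti S R' σ τ pair i _ hv with ⟨hc, he⟩ | ⟨hi, he⟩ <;> exact nomatch he
    | tileaf i a =>
      rcases inv_tileaf S R' σ τ pair i a _ hv with ⟨hc, he⟩ | ⟨hi, he⟩ <;>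
        exact nomatch he
    | scenter i s =>
      rcases inv_scenter S R' σ τ pair i s _ hv with ⟨hc, he⟩ | ⟨hi, u', hp, he⟩ | ⟨hi, h2, he⟩ <;>
        exact nomatch he
    | sleaf i s b' =>
      rcases inv_sleaf S R' σ τ pair i s b' _ hv with
        ⟨hc, he⟩ | ⟨hi, u', hp, ⟨hb, he⟩ | he⟩ | ⟨hi, h2, he⟩ <;> exact nomatch he
    | ycenter i =>
      rcases inv_ycenter S R' σ τ pair i _ hv with ⟨hc, he⟩ | ⟨hi, he⟩
      · exact nomatch he
      · injection he with e
        exact reach_of_eq hv hroot (congrArg _ (ieqt hi e.symm))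
    | yleaf i a =>
      rcases inv_yleaf S R' σ τ pair i a _ hv with ⟨hc, he⟩ | ⟨hi, he⟩ <;>
        exact nomatch he
  | yleaf j b =>
    have hroot : TVert.yleaf ((τ.symm j : {i : Fin m // i ∈ R'}) : Fin m) b ∈
        gmap S R' σ τ pair ⁻¹' {PVert.yleaf j b} := by
      show gmap S R' σ τ pair _ = _
      rw [gyl_in S R' σ τ pair _ (τ.symm j).2]; simp
    refine conn_root _ _ _ hroot ?_
    intro v hv
    cases v with
    | t => exact nomatch (hv : _ = _)
    | tleaf j' => exact nomatch (hv : _ = _)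
    | ti i =>
      rcases inv_ti S R' σ τ pair i _ hv with ⟨hc, he⟩ | ⟨hi, he⟩ <;> exact nomatch he
    | tileaf i a =>
      rcases inv_tileaf S R' σ τ pair i a _ hv with ⟨hc, he⟩ | ⟨hi, he⟩ <;>
        exact nomatch he
    | scenter i s =>
      rcases inv_scenter S R' σ τ pair i s _ hv with ⟨hc, he⟩ | ⟨hi, u', hp, he⟩ | ⟨hi, h2, he⟩ <;>
        exact nomatch he
    | sleaf i s b' =>
      rcases inv_sleaf S R' σ τ pair i s b' _ hv with
        ⟨hc, he⟩ | ⟨hi, u', hp, ⟨hb, he⟩ | he⟩ | ⟨hi, h2, he⟩ <;> exact nomatch he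
    | ycenter i =>
      rcases inv_ycenter S R' σ τ pair i _ hv with ⟨hc, he⟩ | ⟨hi, he⟩ <;>
        exact nomatch he
    | yleaf i a =>
      rcases inv_yleaf S R' σ τ pair i a _ hv with ⟨hc, he⟩ | ⟨hi, he⟩
      · exact nomatch he
      · injection he with e1 e2
        subst e2
        exact reach_of_eq hv hroot (congrArg (fun x => TVert.yleaf x _) (ieqt hi e1.symm))

end Key

/-- If the Inclusive Set Cover instance `⟨{1,…,n}, S, k⟩` (with `n ≥ 1`, all `S_i` nonempty
subsets of `{1,…,n}`, and `k ≤ m`) is a yes-instance, then `P` is a minor of `T`. -/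
theorem stmt_3 {n m k : ℕ} (hn : 1 ≤ n) (S : Fin m → Finset ℕ)
    (hS : ∀ i, (S i).Nonempty ∧ S i ⊆ Finset.Icc 1 n) (hk : k ≤ m)
    (hyes : InclusiveSetCoverYes n S k) :
    ∃ f : TVert n m S → PVert n m k,
      IsMinorEmbedding (Tgraph n m S) (Pgraph n m k) f := by
  obtain ⟨R, f0, hRcard, hsurj, hle⟩ := hyes
  obtain ⟨R', hsub, hR'card⟩ := Finset.exists_superset_card_eq hRcard (by simpa using hk)
  let σ : {i : Fin m // i ∈ R'ᶜ} ≃ Fin (m - k) :=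
    Finset.equivFinOfCardEq (by rw [Finset.card_compl, hR'card, Fintype.card_fin])
  let τ : {i : Fin m // i ∈ R'} ≃ Fin k := Finset.equivFinOfCardEq hR'card
  have hmem : ∀ u : Fin n, (u.val + 1) ∈ Finset.Icc 1 n := fun u => by
    simp only [Finset.mem_Icc]; omega
  let q : Fin n → {p : ℕ × Fin m // p.2 ∈ R ∧ p.1 ∈ S p.2} :=
    fun u => (hsurj ⟨u.val + 1, hmem u⟩).choose
  have hq : ∀ u, f0 (q u) = ⟨u.val + 1, hmem u⟩ :=
    fun u => (hsurj ⟨u.val + 1, hmem u⟩).choose_spec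
  let pair : Fin n → ℕ × Fin m := fun u => (q u).1
  have hmemR : ∀ u, (pair u).2 ∈ R' := fun u => hsub (q u).2.1
  have hmemS : ∀ u, (pair u).1 ∈ S (pair u).2 := fun u => (q u).2.2
  have hge : ∀ u : Fin n, u.val + 1 ≤ (pair u).1 := fun u => by
    have h := hle (q u); rw [hq u] at h; exact h
  have hinj : Function.Injective pair := by
    intro u u' h
    have hqq : q u = q u' := Subtype.ext h
    have h1 : (⟨u.val + 1, hmem u⟩ : {x : ℕ // x ∈ Finset.Icc 1 n}) = ⟨u'.val + 1, hmem u'⟩ :=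
      (hq u).symm.trans (by rw [hqq, hq u'])
    have h2 : u.val + 1 = u'.val + 1 := congrArg Subtype.val h1
    exact Fin.ext (by omega)
  refine ⟨gmap S R' σ τ pair,
    gsurj S R' σ τ pair hmemR hmemS hge hinj,
    gconn S R' σ τ pair hmemR hmemS hge hinj,
    fun u v huv => ?_⟩
  rw [Pgraph, SimpleGraph.fromRel_adj] at huv
  obtain ⟨hne, h | h⟩ := huv
  · exact edge_real S R' σ τ pair hmemR hmemS hge hinj u v h
  · obtain ⟨a, b, hab, h1, h2⟩ := edge_real S R' σ τ pair hmemR hmemS hge hinj v u h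
    exact ⟨b, a, hab.symm, h2, h1⟩
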